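/- For ξ = (θ, v₁, …, vₙ) ∈ ℝ^{3(n+1)} identified with se_n(3), the left Jacobian J(ad_{ξ^∧}) = Σ_{i≥0} (ad_{ξ^∧})^i/(i+1)! has lower-block-triangular form with diagonal blocks J(θ^∧) and first-block-column off-diagonal blocks Q_θ(v_i) = Σ_{n,m≥0} (θ^∧)^n v_i^∧ (θ^∧)^m /(n+m+2)!, and all other blocks zero. -/

import Mathlib

set_option maxHeartbeats 1000000


/-- The hat map on `ℝ³`. -/
def hat (θ : Fin 3 → ℝ) : Matrix (Fin 3) (Fin 3) ℝ :=
  !![0, -θ 2, θ 1; θ 2, 0, -θ 0; -θ 1, θ 0, 0]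

/-- The matrix representation of `ad_{ξ^∧}` for `ξ = (θ, v₁, …, vₙ)` identified with the
vector `ξ : Fin (n+1) × Fin 3 → ℝ` (`θ = ξ (0,·)`, `vₖ = ξ (k,·)` for `k ≠ 0`): block matrix
with diagonal blocks `θ^∧` and blocks `vₖ^∧` in positions `(k, 0)` of the first block column. -/
def adRep (n : ℕ) (ξ : Fin (n + 1) × Fin 3 → ℝ) :
    Matrix (Fin (n + 1) × Fin 3) (Fin (n + 1) × Fin 3) ℝ :=
  Matrix.of fun p q =>
    if p.1 = q.1 then hat (fun i => ξ (0, i)) p.2 q.2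
    else if q.1 = 0 then hat (fun i => ξ (p.1, i)) p.2 q.2
    else 0

/-- `J(M) = ∑_{k≥0} M^k/(k+1)!`. -/
noncomputable def Jmat {ι : Type*} [Fintype ι] [DecidableEq ι] (M : Matrix ι ι ℝ) :
    Matrix ι ι ℝ :=
  ∑' k : ℕ, (((k + 1).factorial : ℝ))⁻¹ • M ^ k

/-- `Q_θ(v) = ∑_{n,m ≥ 0} (θ^∧)^n v^∧ (θ^∧)^m / (n+m+2)!`. -/
noncomputable def Qmat (θ v : Fin 3 → ℝ) : Matrix (Fin 3) (Fin 3) ℝ :=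
  ∑' m : ℕ × ℕ, (((m.1 + m.2 + 2).factorial : ℝ))⁻¹ • (hat θ ^ m.1 * hat v * hat θ ^ m.2)

section Summ
variable {ι : Type*} [Fintype ι] [DecidableEq ι]

lemma norm_one_le' :
    letI := Matrix.linftyOpNormedRing (α := ℝ) (n := ι); ‖(1 : Matrix ι ι ℝ)‖ ≤ 1 := by
  letI := Matrix.linftyOpNormedRing (α := ℝ) (n := ι)
  rw [← Matrix.diagonal_one, Matrix.linfty_opNorm_diagonal]
  exact pi_norm_le_iff_of_nonneg zero_le_one |>.2 fun i => by simp

lemma summable_J (A : Matrix ι ι ℝ) :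
    Summable fun k : ℕ => (((k + 1).factorial : ℝ))⁻¹ • A ^ k := by
  letI := Matrix.linftyOpNormedRing (α := ℝ) (n := ι)
  letI := Matrix.linftyOpNormedAlgebra (R := ℝ) (α := ℝ) (n := ι)
  set c : ℝ := max 1 ‖A‖ with hc
  have hpow : ∀ k : ℕ, ‖A ^ k‖ ≤ c ^ k := by
    intro k
    induction k with
    | zero => simpa using norm_one_le'
    | succ k ih =>
        calc ‖A ^ (k+1)‖ = ‖A * A ^ k‖ := by rw [pow_succ']
        _ ≤ ‖A‖ * ‖A ^ k‖ := norm_mul_le _ _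
        _ ≤ c * c ^ k := by
            apply mul_le_mul (le_max_right _ _) ih (norm_nonneg _)
            exact le_trans zero_le_one (le_max_left _ _)
        _ = c ^ (k+1) := by rw [pow_succ']
  apply Summable.of_norm_bounded (g := fun k : ℕ => c ^ k / k.factorial)
    (Real.summable_pow_div_factorial c)
  intro k
  rw [norm_smul]
  have h1 : ((k.factorial : ℝ))⁻¹ ≤ ((k.factorial : ℝ))⁻¹ := le_refl _
  have hfac : (k.factorial : ℝ) ≤ ((k+1).factorial : ℝ) := by
    exact_mod_cast Nat.factorial_le (Nat.le_succ k)
  calc ‖(((k + 1).factorial : ℝ))⁻¹‖ * ‖A ^ k‖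
      ≤ ((k.factorial : ℝ))⁻¹ * c ^ k := by
        apply mul_le_mul _ (hpow k) (norm_nonneg _) (by positivity)
        rw [Real.norm_eq_abs, abs_of_nonneg (by positivity)]
        exact inv_anti₀ (by positivity) hfac
    _ = c ^ k / k.factorial := by ring

lemma summable_J_entry (A : Matrix ι ι ℝ) (i j : ι) :
    Summable fun k : ℕ => (((k + 1).factorial : ℝ))⁻¹ * (A ^ k) i j := by
  have h := summable_J A
  have h1 := Pi.summable.1 h i
  have h2 := Pi.summable.1 h1 j
  simpa [Matrix.smul_apply, smul_eq_mul] using h2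

lemma Jmat_apply (A : Matrix ι ι ℝ) (i j : ι) :
    Jmat A i j = ∑' k : ℕ, (((k + 1).factorial : ℝ))⁻¹ * (A ^ k) i j := by
  erw [Jmat, tsum_apply (summable_J A), tsum_apply (Pi.summable.1 (summable_J A) i)]
  simp [Matrix.smul_apply, smul_eq_mul]

lemma summable_Q (θ v : Fin 3 → ℝ) :
    Summable fun m : ℕ × ℕ =>
      (((m.1 + m.2 + 2).factorial : ℝ))⁻¹ • (hat θ ^ m.1 * hat v * hat θ ^ m.2) := by
  letI := Matrix.linftyOpNormedRing (α := ℝ) (n := Fin 3)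
  letI := Matrix.linftyOpNormedAlgebra (R := ℝ) (α := ℝ) (n := Fin 3)
  set c : ℝ := max 1 ‖hat θ‖ with hc
  have hc1 : (1:ℝ) ≤ c := le_max_left _ _
  have hc0 : (0:ℝ) ≤ c := le_trans zero_le_one hc1
  have hpow : ∀ k : ℕ, ‖hat θ ^ k‖ ≤ c ^ k := by
    intro k
    induction k with
    | zero => simpa using norm_one_le'
    | succ k ih =>
        calc ‖hat θ ^ (k+1)‖ = ‖hat θ * hat θ ^ k‖ := by rw [pow_succ']
        _ ≤ ‖hat θ‖ * ‖hat θ ^ k‖ := norm_mul_le _ _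
        _ ≤ c * c ^ k := mul_le_mul (le_max_right _ _) ih (norm_nonneg _) hc0
        _ = c ^ (k+1) := by rw [pow_succ']
  have hg : Summable (fun b : ℕ => ‖hat v‖ * c ^ b / b.factorial) := by
    have := (Real.summable_pow_div_factorial c).mul_left ‖hat v‖
    exact this.congr fun b => by rw [mul_div_assoc]
  have hmaj : Summable fun m : ℕ × ℕ =>
      (c ^ m.1 / m.1.factorial) * (‖hat v‖ * c ^ m.2 / m.2.factorial) :=
    Summable.mul_of_nonneg (Real.summable_pow_div_factorial c) hg
      (fun a => by positivity) (fun b => by positivity)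
  apply Summable.of_norm_bounded hmaj
  rintro ⟨a, b⟩
  rw [norm_smul]
  have hfac : ((a.factorial * b.factorial : ℕ) : ℝ) ≤ (((a + b + 2).factorial : ℕ) : ℝ) := by
    exact_mod_cast Nat.le_of_dvd (Nat.factorial_pos _)
      ((Nat.factorial_mul_factorial_dvd_factorial_add a b).trans
        (Nat.factorial_dvd_factorial (by omega)))
  have hnorm : ‖hat θ ^ a * hat v * hat θ ^ b‖ ≤ c ^ a * ‖hat v‖ * c ^ b := by
    calc ‖hat θ ^ a * hat v * hat θ ^ b‖ ≤ ‖hat θ ^ a * hat v‖ * ‖hat θ ^ b‖ := norm_mul_le _ _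
    _ ≤ ‖hat θ ^ a‖ * ‖hat v‖ * ‖hat θ ^ b‖ :=
        mul_le_mul_of_nonneg_right (norm_mul_le _ _) (norm_nonneg _)
    _ ≤ c ^ a * ‖hat v‖ * c ^ b := by
        apply mul_le_mul (mul_le_mul_of_nonneg_right (hpow a) (norm_nonneg _)) (hpow b)
          (norm_nonneg _)
        positivity
  calc ‖(((a + b + 2).factorial : ℝ))⁻¹‖ * ‖hat θ ^ a * hat v * hat θ ^ b‖
      ≤ ((a.factorial * b.factorial : ℕ) : ℝ)⁻¹ * (c ^ a * ‖hat v‖ * c ^ b) := by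
        apply mul_le_mul _ hnorm (norm_nonneg _) (by positivity)
        rw [Real.norm_eq_abs, abs_of_nonneg (by positivity)]
        exact inv_anti₀ (by positivity) hfac
    _ = (c ^ a / a.factorial) * (‖hat v‖ * c ^ b / b.factorial) := by
        push_cast; field_simp

lemma summable_Q_entry (θ v : Fin 3 → ℝ) (i j : Fin 3) :
    Summable fun m : ℕ × ℕ =>
      (((m.1 + m.2 + 2).factorial : ℝ))⁻¹ * (hat θ ^ m.1 * hat v * hat θ ^ m.2) i j := by
  have h := summable_Q θ v
  have h2 := Pi.summable.1 (Pi.summable.1 h i) j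
  simpa [Matrix.smul_apply, smul_eq_mul] using h2

lemma Qmat_apply (θ v : Fin 3 → ℝ) (i j : Fin 3) :
    Qmat θ v i j
      = ∑' m : ℕ × ℕ,
          (((m.1 + m.2 + 2).factorial : ℝ))⁻¹ * (hat θ ^ m.1 * hat v * hat θ ^ m.2) i j := by
  erw [Qmat, tsum_apply (summable_Q θ v), tsum_apply (Pi.summable.1 (summable_Q θ v) i)]
  simp [Matrix.smul_apply, smul_eq_mul]

end Summ

section Block
variable {n : ℕ}

def Tb (n : ℕ) (D : Matrix (Fin 3) (Fin 3) ℝ) (C : Fin (n + 1) → Matrix (Fin 3) (Fin 3) ℝ) :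
    Matrix (Fin (n + 1) × Fin 3) (Fin (n + 1) × Fin 3) ℝ :=
  Matrix.of fun p q =>
    if p.1 = q.1 then D p.2 q.2 else if q.1 = 0 then C p.1 p.2 q.2 else 0

lemma Tb_apply (D : Matrix (Fin 3) (Fin 3) ℝ) (C : Fin (n + 1) → Matrix (Fin 3) (Fin 3) ℝ)
    (p q : Fin (n + 1) × Fin 3) :
    Tb n D C p q = (if p.1 = q.1 then D else if q.1 = 0 then C p.1 else 0) p.2 q.2 := by
  simp only [Tb, Matrix.of_apply]
  split_ifs <;> simp

lemma Tb_mul (D D' : Matrix (Fin 3) (Fin 3) ℝ)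
    (C C' : Fin (n + 1) → Matrix (Fin 3) (Fin 3) ℝ) :
    Tb n D C * Tb n D' C' = Tb n (D * D') fun p => D * C' p + C p * D' := by
  ext p q
  rw [Tb_apply, Matrix.mul_apply, Fintype.sum_prod_type]
  have key : ∀ a : Fin (n + 1), ∀ _ : a ∈ Finset.univ,
      (∑ b : Fin 3, Tb n D C p (a, b) * Tb n D' C' (a, b) q)
        = ((if p.1 = a then D else if a = 0 then C p.1 else 0) *
            (if a = q.1 then D' else if q.1 = 0 then C' a else 0)) p.2 q.2 := by
    intro a _
    rw [Matrix.mul_apply]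
    refine Finset.sum_congr rfl fun b _ => ?_
    rw [Tb_apply, Tb_apply]
  rw [Finset.sum_congr rfl key]
  by_cases hpq : p.1 = q.1
  · rw [if_pos hpq]
    rw [Finset.sum_eq_single p.1]
    · simp [hpq]
    · intro a _ ha
      rw [if_neg (fun h => ha h.symm), if_neg (fun h : a = q.1 => ha (h.trans hpq.symm))]
      by_cases h0 : a = 0
      · have hq0 : ¬ q.1 = 0 := fun h => ha (h0.trans (h.symm.trans hpq.symm))
        simp [h0, hq0]
      · simp [h0]
    · simp
  · rw [if_neg hpq]
    by_cases hq0 : q.1 = 0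
    · rw [if_pos hq0]
      have hp0 : p.1 ≠ 0 := fun h => hpq (h.trans hq0.symm)
      have hsub : ({p.1, 0} : Finset (Fin (n + 1))) ⊆ Finset.univ := Finset.subset_univ _
      rw [← Finset.sum_subset hsub]
      · rw [Finset.sum_pair hp0]
        rw [if_pos rfl, if_neg (fun h : p.1 = q.1 => hpq h), if_pos hq0,
          if_neg (fun h : p.1 = (0 : Fin (n+1)) => hp0 h), if_pos rfl,
          if_pos (hq0.symm : (0 : Fin (n+1)) = q.1)]
        simp [Matrix.add_apply]
      · intro a _ ha
        simp only [Finset.mem_insert, Finset.mem_singleton] at ha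
        push_neg at ha
        rw [if_neg (fun h => ha.1 h.symm), if_neg ha.2]
        simp
    · rw [if_neg hq0]
      apply Finset.sum_eq_zero
      intro a _
      by_cases haq : a = q.1
      · rw [if_neg (fun h : p.1 = a => hpq (h.trans haq)), if_neg (haq ▸ hq0 : ¬ a = 0)]
        simp
      · rw [if_neg haq, if_neg hq0]
        simp

end Block

section Pow
variable {n : ℕ} (ξ : Fin (n + 1) × Fin 3 → ℝ)

lemma adRep_eq :
    adRep n ξ = Tb n (hat fun i => ξ (0, i)) fun p => hat fun i => ξ (p, i) := rfl

lemma Tb_one : (1 : Matrix (Fin (n + 1) × Fin 3) (Fin (n + 1) × Fin 3) ℝ)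
    = Tb n 1 fun _ => 0 := by
  ext p q
  rw [Tb_apply, Matrix.one_apply]
  by_cases h : p.1 = q.1
  · rw [if_pos h]
    by_cases h2 : p.2 = q.2
    · rw [if_pos (Prod.ext h h2), h2, Matrix.one_apply_eq]
    · rw [if_neg (fun hh : p = q => h2 (congrArg Prod.snd hh)), Matrix.one_apply_ne h2]
  · rw [if_neg h]
    rw [if_neg (fun hh : p = q => h (congrArg Prod.fst hh))]
    split_ifs <;> rfl

lemma adRep_pow (k : ℕ) :
    adRep n ξ ^ k
      = Tb n ((hat fun i => ξ (0, i)) ^ k) fun p =>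
          ∑ a ∈ Finset.range k,
            (hat fun i => ξ (0, i)) ^ a * (hat fun i => ξ (p, i)) *
              (hat fun i => ξ (0, i)) ^ (k - 1 - a) := by
  induction k with
  | zero => simp [Tb_one.symm]
  | succ k ih =>
      rw [pow_succ', ih, adRep_eq, Tb_mul, ← pow_succ']
      refine congrArg _ (funext fun p => ?_)
      rw [Finset.sum_range_succ']
      simp only [pow_zero, Nat.sub_zero, one_mul]
      rw [Finset.mul_sum]
      congr 1
      · refine Finset.sum_congr rfl fun a _ => ?_
        have h1 : k + 1 - 1 - (a + 1) = k - 1 - a := by omega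
        rw [pow_succ', h1]
        simp [mul_assoc]

end Pow

/-- For `ξ = (θ, v₁, …, vₙ) ∈ se_n(3)`, the left Jacobian `J(ad_{ξ^∧})` is
lower-block-triangular with diagonal blocks `J(θ^∧)`, first-block-column off-diagonal blocks
`Q_θ(vₖ)`, and all other blocks zero. -/
theorem left_jacobian_sen3_block_form (n : ℕ) (ξ : Fin (n + 1) × Fin 3 → ℝ) :
    Jmat (adRep n ξ)
      = Matrix.of fun p q =>
          if p.1 = q.1 then Jmat (hat fun i => ξ (0, i)) p.2 q.2
          else if q.1 = 0 then Qmat (fun i => ξ (0, i)) (fun i => ξ (p.1, i)) p.2 q.2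
          else 0 := by
  ext p q
  rw [Matrix.of_apply, Jmat_apply]
  by_cases hpq : p.1 = q.1
  · rw [if_pos hpq, Jmat_apply]
    refine tsum_congr fun k => ?_
    rw [adRep_pow, Tb_apply, if_pos hpq]
  · rw [if_neg hpq]
    by_cases hq0 : q.1 = 0
    · rw [if_pos hq0, Qmat_apply]
      set θ : Fin 3 → ℝ := fun i => ξ (0, i) with hθ
      set v : Fin 3 → ℝ := fun i => ξ (p.1, i) with hv
      set F : ℕ → ℝ := fun k => (((k + 1).factorial : ℝ))⁻¹ * ((adRep n ξ ^ k) p q) with hF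
      set g : ℕ × ℕ → ℝ := fun m =>
        (((m.1 + m.2 + 2).factorial : ℝ))⁻¹ * (hat θ ^ m.1 * hat v * hat θ ^ m.2) p.2 q.2
        with hg
      have hFsum : Summable F := summable_J_entry _ p q
      have hgsum : Summable g := summable_Q_entry θ v p.2 q.2
      have hL : ∀ k : ℕ, (adRep n ξ ^ k) p q
          = (∑ a ∈ Finset.range k,
              hat θ ^ a * hat v * hat θ ^ (k - 1 - a)) p.2 q.2 := fun k => by
        rw [adRep_pow, Tb_apply, if_neg hpq, if_pos hq0]
      have hF0 : F 0 = 0 := by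
        simp only [hF, pow_zero, Matrix.one_apply,
          if_neg (fun h : p = q => hpq (congrArg Prod.fst h))]
        ring
      calc (∑' k : ℕ, F k) = F 0 + ∑' k : ℕ, F (k + 1) := hFsum.tsum_eq_zero_add
        _ = ∑' k : ℕ, F (k + 1) := by rw [hF0, zero_add]
        _ = ∑' k : ℕ, ∑ i ∈ Finset.range (k + 1), g (i, k - i) := by
            refine tsum_congr fun k => ?_
            rw [hF]
            beta_reduce
            rw [hL]
            rw [Matrix.sum_apply, Finset.mul_sum]
            refine Finset.sum_congr rfl fun i hi => ?_
            have hik : i ≤ k := Nat.lt_succ_iff.mp (Finset.mem_range.mp hi)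
            have e1 : k + 1 - 1 - i = k - i := by omega
            have e2 : i + (k - i) + 2 = k + 1 + 1 := by omega
            simp only [hg, e1, e2]
        _ = ∑' k : ℕ, ∑ m ∈ Finset.HasAntidiagonal.antidiagonal k, g m := by
            refine tsum_congr fun k => ?_
            rw [Finset.Nat.sum_antidiagonal_eq_sum_range_succ_mk]
        _ = ∑' k : ℕ, ∑' m : (Finset.HasAntidiagonal.antidiagonal k : Finset (ℕ × ℕ)), g ↑m := by
            refine tsum_congr fun k => (Finset.tsum_subtype _ g).symm
        _ = ∑' x : (Σ k : ℕ, (Finset.HasAntidiagonal.antidiagonal k : Finset (ℕ × ℕ))),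
              g (Finset.HasAntidiagonal.sigmaAntidiagonalEquivProd x) := by
            exact (Summable.tsum_sigma ((Equiv.summable_iff Finset.HasAntidiagonal.sigmaAntidiagonalEquivProd).2
              hgsum)).symm
        _ = ∑' m : ℕ × ℕ, g m := Finset.HasAntidiagonal.sigmaAntidiagonalEquivProd.tsum_eq g
    · rw [if_neg hq0]
      have : ∀ k : ℕ, (((k + 1).factorial : ℝ))⁻¹ * ((adRep n ξ ^ k) p q) = 0 := fun k => by
        rw [adRep_pow, Tb_apply, if_neg hpq, if_neg hq0]
        simp
      rw [tsum_congr this, tsum_zero]
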